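/- Let G be a d-regular λ-expander graph on n vertices, let (X_i) be the simple random walk on G with uniform initial distribution π, let val: V → {0,1} be a labelling with E_π(val) = α ∈ (0,1), and let Z_t = Σ_{i=0}^{t−1} val(X_i). Then |Var(Z_t) − α(1−α)t| ≤ 2α(1−α)t·λ/(1−λ). -/

import Mathlib

open Finset Matrix

lemma geo_aux (lam0 : ℝ) (h0 : 0 ≤ lam0) (h1 : lam0 < 1) (m : ℕ) :
    ∑ k ∈ Finset.range m, lam0 ^ (k + 1) ≤ lam0 / (1 - lam0) := by
  have h2 : (0:ℝ) < 1 - lam0 := by linarith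
  have h3 : (∑ k ∈ Finset.range m, lam0 ^ k) * (lam0 - 1) = lam0 ^ m - 1 := geom_sum_mul lam0 m
  have h4 : ∑ k ∈ Finset.range m, lam0 ^ (k + 1) = lam0 * ∑ k ∈ Finset.range m, lam0 ^ k := by
    rw [Finset.mul_sum]; exact Finset.sum_congr rfl fun k _ => by ring
  have h5 : (0:ℝ) ≤ lam0 ^ m := pow_nonneg h0 m
  have h6 : ∑ k ∈ Finset.range m, lam0 ^ k ≤ (1 - lam0)⁻¹ := by
    rw [show (1 - lam0)⁻¹ = 1 / (1 - lam0) by rw [one_div], le_div_iff₀ h2]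
    nlinarith
  rw [h4, div_eq_mul_inv]
  exact mul_le_mul_of_nonneg_left h6 h0

lemma row_aux (lam0 : ℝ) (h0 : 0 ≤ lam0) (h1 : lam0 < 1) (μ : ℝ) (hμ : |μ| ≤ lam0)
    (t i : ℕ) (hi : i < t) :
    |(∑ i' ∈ Finset.range t, μ ^ (max i i' - min i i')) - 1| ≤ 2 * (lam0 / (1 - lam0)) := by
  have hsplit : ∑ i' ∈ Finset.range t, μ ^ (max i i' - min i i')
      = (∑ i' ∈ Finset.range i, μ ^ (i - i'))
        + (1 + ∑ i' ∈ Finset.Ico (i + 1) t, μ ^ (i' - i)) := by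
    rw [Finset.range_eq_Ico, ← Finset.sum_Ico_consecutive _ (Nat.zero_le i) hi.le,
      Finset.sum_eq_sum_Ico_succ_bot hi]
    simp only [← Finset.range_eq_Ico]
    rw [Nat.max_self, Nat.min_self, Nat.sub_self, pow_zero]
    congr 1
    · apply Finset.sum_congr rfl
      intro i' hi'
      have : i' < i := Finset.mem_range.mp hi'
      rw [Nat.max_eq_left this.le, Nat.min_eq_right this.le]
    · congr 1
      apply Finset.sum_congr rfl
      intro i' hi'
      have : i < i' := (Finset.mem_Ico.mp hi').1
      rw [Nat.max_eq_right this.le, Nat.min_eq_left this.le]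
  have habs : ∀ (s : Finset ℕ) (e : ℕ → ℕ), (∀ k ∈ s, 1 ≤ e k) →
      |∑ i' ∈ s, μ ^ (e i')| ≤ ∑ i' ∈ s, lam0 ^ (e i') := by
    intro s e _
    refine (Finset.abs_sum_le_sum_abs _ _).trans (Finset.sum_le_sum fun k _ => ?_)
    rw [abs_pow]
    exact pow_le_pow_left₀ (abs_nonneg μ) hμ _
  have hA : |∑ i' ∈ Finset.range i, μ ^ (i - i')| ≤ lam0 / (1 - lam0) := by
    refine (habs _ _ fun k hk => by
      have := Finset.mem_range.mp hk; omega).trans ?_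
    have hre : ∑ i' ∈ Finset.range i, lam0 ^ (i - i')
        = ∑ k ∈ Finset.range i, lam0 ^ (k + 1) := by
      rw [← Finset.sum_range_reflect (fun k => lam0 ^ (k + 1)) i]
      apply Finset.sum_congr rfl
      intro i' hi'
      have h : i' < i := Finset.mem_range.mp hi'
      congr 1
      omega
    rw [hre]; exact geo_aux lam0 h0 h1 i
  have hB : |∑ i' ∈ Finset.Ico (i + 1) t, μ ^ (i' - i)| ≤ lam0 / (1 - lam0) := by
    refine (habs _ _ fun k hk => by
      have := (Finset.mem_Ico.mp hk).1; omega).trans ?_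
    have hre : ∑ i' ∈ Finset.Ico (i + 1) t, lam0 ^ (i' - i)
        = ∑ k ∈ Finset.range (t - (i + 1)), lam0 ^ (k + 1) := by
      rw [Finset.sum_Ico_eq_sum_range]
      apply Finset.sum_congr rfl
      intro k _
      congr 1
      omega
    rw [hre]; exact geo_aux lam0 h0 h1 _
  calc |(∑ i' ∈ Finset.range t, μ ^ (max i i' - min i i')) - 1|
      = |(∑ i' ∈ Finset.range i, μ ^ (i - i'))
          + ∑ i' ∈ Finset.Ico (i + 1) t, μ ^ (i' - i)| := by rw [hsplit]; ring_nf
    _ ≤ _ := by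
        refine (abs_add_le _ _).trans ?_
        linarith


/-- For the simple random walk on a d-regular λ-expander graph started from the
uniform distribution, with a 0/1 labelling val of mean α ∈ (0,1) and
Z_t = Σ_{i<t} val(X_i), the variance satisfies
|Var(Z_t) - α(1-α)t| ≤ 2α(1-α)t·λ/(1-λ).  Here Var(Z_t) = E(Z_t²) - (αt)² is
written out via the Markov property, and the λ-expander condition is expressed
through an orthonormal eigenbasis of the transition matrix. -/
theorem variance_bound_expander (n d : ℕ) (hn : 0 < n) (hd : 0 < d)
    (G : SimpleGraph (Fin n)) [DecidableRel G.Adj] (hreg : G.IsRegularOfDegree d)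
    (P : Matrix (Fin n) (Fin n) ℝ)
    (hP : ∀ x y, P x y = if G.Adj x y then (1 : ℝ) / d else 0)
    (lam : Fin n → ℝ) (f : Fin n → Fin n → ℝ) (j₀ : Fin n)
    (heig : ∀ j, P *ᵥ f j = lam j • f j)
    (horth : ∀ j k, (∑ x, f j x * f k x / n) = if j = k then (1 : ℝ) else 0)
    (hf0 : ∀ x, f j₀ x = 1) (hl0 : lam j₀ = 1)
    (lam0 : ℝ) (hlam0 : 0 ≤ lam0) (hlam1 : lam0 < 1)
    (hexp : ∀ j, j ≠ j₀ → |lam j| ≤ lam0)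
    (val : Fin n → ℕ) (hval : ∀ v, val v = 0 ∨ val v = 1)
    (α : ℝ) (hα : α = (∑ x, (val x : ℝ)) / n) (hα0 : 0 < α) (hα1 : α < 1)
    (varZ : ℕ → ℝ)
    (hvar : ∀ t, varZ t =
      (∑ i ∈ Finset.range t, ∑ j ∈ Finset.range t, ∑ x, ∑ y,
          (1 / (n : ℝ)) * (val x : ℝ) * (P ^ (max i j - min i j)) x y * (val y : ℝ))
        - (α * t) ^ 2)
    (t : ℕ) :
    |varZ t - α * (1 - α) * t| ≤ 2 * α * (1 - α) * t * (lam0 / (1 - lam0)) := by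
  have hn' : (n:ℝ) ≠ 0 := Nat.cast_ne_zero.mpr hn.ne'
  set c : Fin n → ℝ := fun j => (∑ x, (val x : ℝ) * f j x) / n with hcdef
  have horth' : ∀ j k, (∑ x, f j x * f k x) = if j = k then (n:ℝ) else 0 := by
    intro j k
    have h := horth j k
    rw [← Finset.sum_div, div_eq_iff hn'] at h
    rw [h]; split <;> simp
  -- completeness of the eigenbasis
  have hcomp : ∀ x y : Fin n, (∑ j, f j x * f j y) = if x = y then (n:ℝ) else 0 := by
    set F : Matrix (Fin n) (Fin n) ℝ := Matrix.of fun j x => f j x with hF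
    have hFFt : F * ((n:ℝ)⁻¹ • Fᵀ) = 1 := by
      ext j k
      simp only [Matrix.mul_apply, Matrix.smul_apply, Matrix.transpose_apply, Matrix.of_apply,
        smul_eq_mul, hF]
      rw [show ∑ x, f j x * ((n:ℝ)⁻¹ * f k x) = (n:ℝ)⁻¹ * ∑ x, f j x * f k x by
        rw [Finset.mul_sum]; exact Finset.sum_congr rfl fun x _ => by ring]
      rw [horth' j k, Matrix.one_apply]
      split <;> field_simp <;> simp
    have hTtF := mul_eq_one_comm.mp hFFt
    intro x y
    have h : (((n:ℝ)⁻¹ • Fᵀ) * F) x y = (1 : Matrix (Fin n) (Fin n) ℝ) x y := by rw [hTtF]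
    simp only [Matrix.mul_apply, Matrix.smul_apply, Matrix.transpose_apply, Matrix.of_apply,
      smul_eq_mul, Matrix.one_apply, hF] at h
    have h2 : (n:ℝ)⁻¹ * ∑ j, f j x * f j y = if x = y then (1:ℝ) else 0 := by
      rw [Finset.mul_sum, ← h]
      exact Finset.sum_congr rfl fun j _ => by ring
    rw [show (∑ j, f j x * f j y) = (n:ℝ) * ((n:ℝ)⁻¹ * ∑ j, f j x * f j y) by field_simp, h2]
    split <;> simp
  have hval_expand : ∀ x, (val x : ℝ) = ∑ j, c j * f j x := by
    intro x
    refine Eq.symm ?_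
    calc ∑ j, c j * f j x = (∑ j, ∑ y, (val y:ℝ) * f j y * f j x) / n := by
          rw [Finset.sum_div]
          refine Finset.sum_congr rfl fun j _ => ?_
          simp only [hcdef]
          rw [div_mul_eq_mul_div, Finset.sum_mul]
      _ = (∑ y, (val y:ℝ) * ∑ j, f j y * f j x) / n := by
          rw [Finset.sum_comm]
          congr 1
          refine Finset.sum_congr rfl fun y _ => ?_
          rw [Finset.mul_sum]; exact Finset.sum_congr rfl fun j _ => by ring
      _ = (val x : ℝ) := by
          have : ∑ y, (val y:ℝ) * ∑ j, f j y * f j x = (val x:ℝ) * n := by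
            simp only [hcomp]
            simp [mul_ite, mul_zero, Finset.sum_ite_eq']
          rw [this]; field_simp
  have hPk : ∀ (k : ℕ) (j : Fin n), (P ^ k) *ᵥ f j = (lam j ^ k) • f j := by
    intro k j
    induction k with
    | zero => simp [Matrix.one_mulVec]
    | succ k ih =>
      rw [pow_succ', ← Matrix.mulVec_mulVec, ih, Matrix.mulVec_smul, heig, smul_smul, pow_succ]
  have hw : ∀ j, ∑ x, (val x:ℝ) * f j x = c j * n := by
    intro j; simp only [hcdef]; field_simp
  have hkey : ∀ k : ℕ, (∑ x, ∑ y, (1 / (n:ℝ)) * (val x:ℝ) * (P ^ k) x y * (val y:ℝ))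
      = ∑ j, lam j ^ k * (c j)^2 := by
    intro k
    have hrow : ∀ x, ∑ y, (P ^ k) x y * (val y:ℝ) = ∑ j, c j * (lam j ^ k * f j x) := by
      intro x
      calc ∑ y, (P^k) x y * (val y:ℝ) = ∑ y, ∑ j, (P^k) x y * (c j * f j y) := by
            refine Finset.sum_congr rfl fun y _ => ?_
            rw [← Finset.mul_sum, ← hval_expand y]
        _ = ∑ j, c j * ∑ y, (P^k) x y * f j y := by
            rw [Finset.sum_comm]
            refine Finset.sum_congr rfl fun j _ => ?_
            rw [Finset.mul_sum]; exact Finset.sum_congr rfl fun y _ => by ring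
        _ = ∑ j, c j * (lam j ^ k * f j x) := by
            refine Finset.sum_congr rfl fun j _ => ?_
            congr 1
            have := congrFun (hPk k j) x
            simpa [Matrix.mulVec, dotProduct] using this
    calc ∑ x, ∑ y, (1 / (n:ℝ)) * (val x:ℝ) * (P ^ k) x y * (val y:ℝ)
        = ∑ x, (1 / (n:ℝ)) * (val x:ℝ) * ∑ y, (P ^ k) x y * (val y:ℝ) := by
          refine Finset.sum_congr rfl fun x _ => ?_
          rw [Finset.mul_sum]; exact Finset.sum_congr rfl fun y _ => by ring
      _ = ∑ x, ∑ j, (1 / (n:ℝ)) * (val x:ℝ) * (c j * (lam j ^ k * f j x)) := by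
          refine Finset.sum_congr rfl fun x _ => ?_
          rw [hrow x, Finset.mul_sum]
      _ = ∑ j, (1 / (n:ℝ)) * c j * lam j ^ k * ∑ x, (val x:ℝ) * f j x := by
          rw [Finset.sum_comm]
          refine Finset.sum_congr rfl fun j _ => ?_
          rw [Finset.mul_sum]; exact Finset.sum_congr rfl fun x _ => by ring
      _ = ∑ j, lam j ^ k * (c j)^2 := by
          refine Finset.sum_congr rfl fun j _ => ?_
          rw [hw j]
          field_simp
  have hc0 : c j₀ = α := by
    simp only [hcdef, hf0, mul_one, hα]
  have hsumsq : ∑ j, (c j)^2 = α := by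
    have h0 := hkey 0
    simp only [pow_zero, one_mul] at h0
    rw [← h0, hα]
    rw [Finset.sum_div]
    refine Finset.sum_congr rfl fun x _ => ?_
    have : ∑ y, (1 / (n:ℝ)) * (val x:ℝ) * (1 : Matrix (Fin n) (Fin n) ℝ) x y * (val y:ℝ)
        = (1 / (n:ℝ)) * (val x:ℝ) * (val x:ℝ) := by
      rw [Finset.sum_eq_single x]
      · simp [Matrix.one_apply]
      · intro y _ hy
        simp [Matrix.one_apply, Ne.symm hy]
      · simp
    rw [this]
    rcases hval x with h | h <;> rw [h] <;> push_cast <;> ring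
  set S : Fin n → ℝ := fun j => ∑ i ∈ Finset.range t, ∑ i' ∈ Finset.range t,
      lam j ^ (max i i' - min i i') with hSdef
  have hS0 : S j₀ = (t:ℝ)^2 := by
    simp only [hSdef, hl0, one_pow, Finset.sum_const, Finset.card_range, nsmul_eq_mul]
    ring
  have herase : ∑ j ∈ Finset.univ.erase j₀, (c j)^2 = α - α^2 := by
    have h := Finset.add_sum_erase Finset.univ (fun j => (c j)^2) (Finset.mem_univ j₀)
    rw [hsumsq, hc0] at h
    linarith
  have hmain : varZ t - α * (1 - α) * t
      = ∑ j ∈ Finset.univ.erase j₀, (c j)^2 * (S j - t) := by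
    have h2 : varZ t = (∑ j, (c j)^2 * S j) - (α * t)^2 := by
      rw [hvar t]
      congr 1
      calc ∑ i ∈ Finset.range t, ∑ i' ∈ Finset.range t, ∑ x, ∑ y,
            (1 / (n : ℝ)) * (val x : ℝ) * (P ^ (max i i' - min i i')) x y * (val y : ℝ)
          = ∑ i ∈ Finset.range t, ∑ i' ∈ Finset.range t, ∑ j,
              lam j ^ (max i i' - min i i') * (c j)^2 := by
            exact Finset.sum_congr rfl fun i _ => Finset.sum_congr rfl fun i' _ => hkey _
        _ = ∑ i ∈ Finset.range t, ∑ j, ∑ i' ∈ Finset.range t,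
              lam j ^ (max i i' - min i i') * (c j)^2 :=
            Finset.sum_congr rfl fun i _ => Finset.sum_comm
        _ = ∑ j, ∑ i ∈ Finset.range t, ∑ i' ∈ Finset.range t,
              lam j ^ (max i i' - min i i') * (c j)^2 := Finset.sum_comm
        _ = ∑ j, (c j)^2 * S j := by
            refine Finset.sum_congr rfl fun j _ => ?_
            simp only [hSdef, Finset.mul_sum]
            exact Finset.sum_congr rfl fun i _ => Finset.sum_congr rfl fun i' _ => by ring
    have h3 : ∑ j, (c j)^2 * S j
        = α^2 * (t:ℝ)^2 + ∑ j ∈ Finset.univ.erase j₀, (c j)^2 * S j := by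
      rw [← Finset.add_sum_erase Finset.univ (fun j => (c j)^2 * S j) (Finset.mem_univ j₀),
        hc0, hS0]
    have h4 : ∑ j ∈ Finset.univ.erase j₀, (c j)^2 * (S j - t)
        = (∑ j ∈ Finset.univ.erase j₀, (c j)^2 * S j) - (α - α^2) * t := by
      rw [← herase, Finset.sum_mul, ← Finset.sum_sub_distrib]
      exact Finset.sum_congr rfl fun j _ => by ring
    rw [h2, h3, h4]
    ring
  have hSb : ∀ j ∈ Finset.univ.erase j₀, |S j - t| ≤ 2 * t * (lam0 / (1 - lam0)) := by
    intro j hj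
    have hμ := hexp j (Finset.ne_of_mem_erase hj)
    have hrw : S j - t = ∑ i ∈ Finset.range t,
        ((∑ i' ∈ Finset.range t, lam j ^ (max i i' - min i i')) - 1) := by
      rw [Finset.sum_sub_distrib]
      simp [hSdef, Finset.card_range]
    rw [hrw]
    calc |∑ i ∈ Finset.range t, ((∑ i' ∈ Finset.range t, lam j ^ (max i i' - min i i')) - 1)|
        ≤ ∑ i ∈ Finset.range t, |(∑ i' ∈ Finset.range t, lam j ^ (max i i' - min i i')) - 1| :=
          Finset.abs_sum_le_sum_abs _ _
      _ ≤ ∑ _i ∈ Finset.range t, 2 * (lam0 / (1 - lam0)) :=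
          Finset.sum_le_sum fun i hi =>
            row_aux lam0 hlam0 hlam1 (lam j) hμ t i (Finset.mem_range.mp hi)
      _ = 2 * t * (lam0 / (1 - lam0)) := by
          rw [Finset.sum_const, Finset.card_range, nsmul_eq_mul]; ring
  rw [hmain]
  have hg0 : (0:ℝ) ≤ 2 * t * (lam0 / (1 - lam0)) := by
    have : (0:ℝ) < 1 - lam0 := by linarith
    positivity
  calc |∑ j ∈ Finset.univ.erase j₀, (c j)^2 * (S j - t)|
      ≤ ∑ j ∈ Finset.univ.erase j₀, (c j)^2 * |S j - t| := by
        refine (Finset.abs_sum_le_sum_abs _ _).trans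
          (le_of_eq (Finset.sum_congr rfl fun j _ => ?_))
        rw [abs_mul, abs_of_nonneg (sq_nonneg _)]
    _ ≤ ∑ j ∈ Finset.univ.erase j₀, (c j)^2 * (2 * t * (lam0 / (1 - lam0))) :=
        Finset.sum_le_sum fun j hj => mul_le_mul_of_nonneg_left (hSb j hj) (sq_nonneg _)
    _ = (∑ j ∈ Finset.univ.erase j₀, (c j)^2) * (2 * t * (lam0 / (1 - lam0))) := by
        rw [← Finset.sum_mul]
    _ = (α - α^2) * (2 * t * (lam0 / (1 - lam0))) := by rw [herase]
    _ = 2 * α * (1 - α) * t * (lam0 / (1 - lam0)) := by ring
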